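/- Assume u ∈ C²([0,R_s];ℝ) satisfies u''(r) + ((n+2k−1)/r)u'(r) = q(r)u(r) for 0 < r < R_s, together with u'(0) = 0 and u(R_s) = 1. Then: (i) 0 < u(r) ≤ 1 for all r ∈ [0,R_s]; (ii) u'(r) = r^{−(n+2k−1)} ∫₀^r ρ^{n+2k−1} q(ρ) u(ρ) dρ for 0 < r ≤ R_s; (iii) 0 ≤ u'(r) ≤ C₀ r/(n+2k) for 0 ≤ r ≤ R_s; and (iv) 1 − (C₀R_s/(n+2k))(R_s−r) ≤ u(r) ≤ 1 for 0 ≤ r ≤ R_s. (Lemma 3.3, assertions (1) and (2), where q(r) = F'(c_s(r)).) -/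

import Mathlib

open Set Real intervalIntegral

/-- Lemma 3.3, assertions (1) and (2): if `u ∈ C²([0,R_s])` satisfies
`u'' + ((n+2k−1)/r) u' = q u` on `(0,R_s)` with `u'(0) = 0`, `u(R_s) = 1`, and
`0 < q ≤ C₀`, then `0 < u ≤ 1`, the integral formula for `u'` holds,
`0 ≤ u' ≤ C₀ r/(n+2k)` and `1 − (C₀ R_s/(n+2k))(R_s − r) ≤ u ≤ 1` on `[0,R_s]`. -/
theorem stmt_2
    (n k : ℕ) (hn : 2 ≤ n) (Rs C₀ : ℝ) (hRs : 0 < Rs) (hC₀ : 0 < C₀)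
    (q : ℝ → ℝ) (hqcont : ContinuousOn q (Icc 0 Rs))
    (hq : ∀ r ∈ Icc (0:ℝ) Rs, 0 < q r ∧ q r ≤ C₀)
    (u u' u'' : ℝ → ℝ)
    (hu' : ∀ r ∈ Icc (0:ℝ) Rs, HasDerivAt u (u' r) r)
    (hu'' : ∀ r ∈ Icc (0:ℝ) Rs, HasDerivAt u' (u'' r) r)
    (hu''cont : ContinuousOn u'' (Icc 0 Rs))
    (hode : ∀ r ∈ Ioo (0:ℝ) Rs, u'' r + ((n + 2 * k - 1 : ℝ) / r) * u' r = q r * u r)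
    (hu'0 : u' 0 = 0) (huRs : u Rs = 1) :
    (∀ r ∈ Icc (0:ℝ) Rs, 0 < u r ∧ u r ≤ 1) ∧
    (∀ r ∈ Ioc (0:ℝ) Rs,
      u' r = (∫ ρ in (0:ℝ)..r, ρ ^ (n + 2 * k - 1) * q ρ * u ρ) / r ^ (n + 2 * k - 1)) ∧
    (∀ r ∈ Icc (0:ℝ) Rs, 0 ≤ u' r ∧ u' r ≤ C₀ * r / (n + 2 * k)) ∧
    (∀ r ∈ Icc (0:ℝ) Rs, 1 - (C₀ * Rs / (n + 2 * k)) * (Rs - r) ≤ u r ∧ u r ≤ 1) := by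
  have hn2k : 1 ≤ n + 2 * k := by omega
  set m : ℕ := n + 2 * k - 1 with hm_def
  have hm1 : 1 ≤ m := by omega
  have hm0 : m ≠ 0 := by omega
  have hmcast : (m : ℝ) = (n : ℝ) + 2 * k - 1 := by
    rw [hm_def, Nat.cast_sub hn2k]; push_cast; ring
  have hucont : ContinuousOn u (Icc 0 Rs) := fun r hr =>
    (hu' r hr).continuousAt.continuousWithinAt
  have hu'cont : ContinuousOn u' (Icc 0 Rs) := fun r hr =>
    (hu'' r hr).continuousAt.continuousWithinAt
  set g : ℝ → ℝ := fun ρ => ρ ^ m * (q ρ * u ρ) with hg_def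
  have hgcont : ContinuousOn g (Icc 0 Rs) :=
    ((continuous_pow m).continuousOn).mul (hqcont.mul hucont)
  set v : ℝ → ℝ := fun r => r ^ m * u' r with hv_def
  have hvcont : ContinuousOn v (Icc 0 Rs) := ((continuous_pow m).continuousOn).mul hu'cont
  have hvderiv : ∀ r ∈ Ioo (0:ℝ) Rs, HasDerivAt v (g r) r := by
    intro r hr
    have hrI : r ∈ Icc (0:ℝ) Rs := ⟨hr.1.le, hr.2.le⟩
    have hr0 : r ≠ 0 := ne_of_gt hr.1
    have h2 := (hasDerivAt_pow m r).mul (hu'' r hrI)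
    have hode' : u'' r = q r * u r - ((m:ℝ) / r) * u' r := by
      rw [hmcast]; linarith [hode r hr]
    have hrm : r ^ m = r ^ (m - 1) * r := by
      conv_lhs => rw [show m = (m - 1) + 1 by omega]
      rw [pow_succ]
    have h2 : HasDerivAt v (↑m * r ^ (m - 1) * u' r + r ^ m * u'' r) r := h2
    convert h2 using 1
    rw [hode', hg_def]
    simp only
    rw [hrm]
    field_simp
    ring
  have hgint : ∀ a b : ℝ, 0 ≤ a → a ≤ b → b ≤ Rs →
      IntervalIntegrable g MeasureTheory.volume a b := by
    intro a b ha hab hb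
    exact (hgcont.mono (Icc_subset_Icc ha hb)).intervalIntegrable_of_Icc hab
  have hvInt : ∀ a b : ℝ, 0 ≤ a → a ≤ b → b ≤ Rs → v b - v a = ∫ ρ in a..b, g ρ := by
    intro a b ha hab hb
    exact (intervalIntegral.integral_eq_sub_of_hasDeriv_right_of_le hab
      (hvcont.mono (Icc_subset_Icc ha hb))
      (fun x hx => (hvderiv x ⟨lt_of_le_of_lt ha hx.1, lt_of_lt_of_le hx.2 hb⟩).hasDerivWithinAt)
      (hgint a b ha hab hb)).symm
  have hv0 : v 0 = 0 := by simp [hv_def, zero_pow hm0]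
  have hvEq : ∀ b ∈ Icc (0:ℝ) Rs, v b = ∫ ρ in (0:ℝ)..b, g ρ := by
    intro b hb
    have h := hvInt 0 b le_rfl hb.1 hb.2
    rw [hv0] at h; linarith
  have huInt : ∀ a b : ℝ, 0 ≤ a → a ≤ b → b ≤ Rs → u b - u a = ∫ ρ in a..b, u' ρ := by
    intro a b ha hab hb
    refine (intervalIntegral.integral_eq_sub_of_hasDerivAt (fun x hx => hu' x ?_) ?_).symm
    · rw [uIcc_of_le hab] at hx; exact ⟨le_trans ha hx.1, le_trans hx.2 hb⟩
    · exact (hu'cont.mono (Icc_subset_Icc ha hb)).intervalIntegrable_of_Icc hab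
  obtain ⟨r₀, hr₀, hmin⟩ := isCompact_Icc.exists_isMinOn (nonempty_Icc.mpr hRs.le) hucont
  have hminle : ∀ r ∈ Icc (0:ℝ) Rs, u r₀ ≤ u r := fun r hr => hmin hr
  have hμpos : 0 < u r₀ := by
    by_contra hμ
    push_neg at hμ
    rcases hμ.lt_or_eq with hlt | heq
    · -- case u r₀ < 0
      have hucont' : ∀ r ∈ Icc (0:ℝ) Rs, ContinuousAt u r := fun r hr => (hu' r hr).continuousAt
      have hScl : IsClosed (Icc (0:ℝ) Rs ∩ u ⁻¹' {u r₀}) :=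
        hucont.preimage_isClosed_of_isClosed isClosed_Icc isClosed_singleton
      have hSne : (Icc (0:ℝ) Rs ∩ u ⁻¹' {u r₀}).Nonempty := ⟨r₀, hr₀, rfl⟩
      have hSbdd : BddAbove (Icc (0:ℝ) Rs ∩ u ⁻¹' {u r₀}) := ⟨Rs, fun x hx => hx.1.2⟩
      set a := sSup (Icc (0:ℝ) Rs ∩ u ⁻¹' {u r₀}) with ha_def
      have haS := hScl.csSup_mem hSne hSbdd
      have haI : a ∈ Icc (0:ℝ) Rs := haS.1
      have hua : u a = u r₀ := haS.2
      have haRs : a < Rs := by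
        rcases lt_or_eq_of_le haI.2 with h | h
        · exact h
        · exfalso; rw [h, huRs] at hua; linarith
      have hu'a : u' a = 0 := by
        rcases eq_or_lt_of_le haI.1 with h0 | h0
        · rw [← h0]; exact hu'0
        · have hloc : IsLocalMin u a := by
            have hnhds : Icc (0:ℝ) Rs ∈ nhds a := Icc_mem_nhds h0 haRs
            exact Filter.eventually_of_mem hnhds (fun x hx => hua ▸ hminle x hx)
          exact hloc.hasDerivAt_eq_zero (hu' a haI)
      have hTcl : IsClosed (Icc a Rs ∩ u ⁻¹' (Ici 0)) :=
        (hucont.mono (Icc_subset_Icc haI.1 le_rfl)).preimage_isClosed_of_isClosed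
          isClosed_Icc isClosed_Ici
      have hTne : (Icc a Rs ∩ u ⁻¹' (Ici 0)).Nonempty :=
        ⟨Rs, ⟨haI.2, le_rfl⟩, by simp [mem_preimage, huRs]⟩
      have hTbdd : BddBelow (Icc a Rs ∩ u ⁻¹' (Ici 0)) := ⟨a, fun x hx => hx.1.1⟩
      set b := sInf (Icc a Rs ∩ u ⁻¹' (Ici 0)) with hb_def
      have hbT := hTcl.csInf_mem hTne hTbdd
      have hbI : b ∈ Icc a Rs := hbT.1
      have hub : (0:ℝ) ≤ u b := hbT.2
      have hbRs : b ≤ Rs := hbI.2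
      have hneg : ∀ r, a ≤ r → r < b → u r < 0 := by
        intro r h1 h2
        by_contra hc
        push_neg at hc
        exact absurd (csInf_le hTbdd ⟨⟨h1, le_trans h2.le hbRs⟩, hc⟩) (not_le.mpr h2)
      have hab : a < b := by
        rcases eq_or_lt_of_le hbI.1 with h | h
        · exfalso; rw [← h] at hub; rw [hua] at hub; linarith
        · exact h
      have hva : v a = 0 := by rw [hv_def]; simp [hu'a]
      have hu'neg : ∀ r, a < r → r ≤ b → u' r < 0 := by
        intro r h1 h2
        have hrI : r ∈ Icc (0:ℝ) Rs := ⟨le_trans haI.1 h1.le, le_trans h2 hbRs⟩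
        have hr0 : 0 < r := lt_of_le_of_lt haI.1 h1
        have hvr : v r - v a = ∫ ρ in a..r, g ρ := hvInt a r haI.1 h1.le hrI.2
        have hint_neg : (∫ ρ in a..r, g ρ) < 0 := by
          have hpos := intervalIntegral_pos_of_pos_on
            (f := fun ρ => -g ρ) ((hgint a r haI.1 h1.le hrI.2).neg) ?_ h1
          · rw [intervalIntegral.integral_neg] at hpos; linarith
          · intro x hx
            have hx0 : 0 < x := lt_of_le_of_lt haI.1 hx.1
            have hxI : x ∈ Icc (0:ℝ) Rs := ⟨hx0.le, le_trans hx.2.le hrI.2⟩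
            have hux : u x < 0 := hneg x hx.1.le (lt_of_lt_of_le hx.2 h2)
            exact neg_pos.mpr
              (mul_neg_of_pos_of_neg (pow_pos hx0 m) (mul_neg_of_pos_of_neg (hq x hxI).1 hux))
        have hvrneg : v r < 0 := by rw [hva] at hvr; linarith
        by_contra hc
        push_neg at hc
        have hvv : v r = r ^ m * u' r := rfl
        nlinarith [pow_pos hr0 m]
      have hintu : u b - u a = ∫ ρ in a..b, u' ρ := huInt a b haI.1 hab.le hbRs
      have hle0 : (∫ ρ in a..b, u' ρ) ≤ 0 := by
        have h : 0 ≤ ∫ ρ in a..b, -u' ρ := by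
          apply intervalIntegral.integral_nonneg hab.le
          intro x hx
          rcases eq_or_lt_of_le hx.1 with h | h
          · rw [← h, hu'a]; simp
          · simp only [neg_nonneg]; exact (hu'neg x h hx.2).le
        rw [intervalIntegral.integral_neg] at h; linarith
      rw [hua] at hintu
      linarith
    · -- case u r₀ = 0
      have hunn : ∀ r ∈ Icc (0:ℝ) Rs, 0 ≤ u r := fun r hr => heq ▸ hminle r hr
      have hu'nn : ∀ r ∈ Icc (0:ℝ) Rs, 0 ≤ u' r := by
        intro r hr
        rcases eq_or_lt_of_le hr.1 with h0 | h0
        · rw [← h0]; exact le_of_eq hu'0.symm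
        · have hvr : 0 ≤ v r := by
            rw [hvEq r hr]
            apply intervalIntegral.integral_nonneg hr.1
            intro x hx
            have hxI : x ∈ Icc (0:ℝ) Rs := ⟨hx.1, le_trans hx.2 hr.2⟩
            exact mul_nonneg (pow_nonneg hx.1 m)
              (mul_nonneg (hq x hxI).1.le (hunn x hxI))
          have hvv : v r = r ^ m * u' r := rfl
          nlinarith [pow_pos h0 m]
      have humono : ∀ a b : ℝ, 0 ≤ a → a ≤ b → b ≤ Rs → u a ≤ u b := by
        intro a b ha hab hb
        have h := huInt a b ha hab hb
        have hnn : 0 ≤ ∫ ρ in a..b, u' ρ :=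
          intervalIntegral.integral_nonneg hab
            (fun x hx => hu'nn x ⟨le_trans ha hx.1, le_trans hx.2 hb⟩)
        linarith
      have hu00 : u 0 = 0 := by
        have h1 := humono 0 r₀ le_rfl hr₀.1 hr₀.2
        have h2 := hunn 0 (left_mem_Icc.mpr hRs.le)
        linarith
      have hKey : ∀ s ∈ Icc (0:ℝ) Rs, u' s ≤ C₀ * Rs * u s := by
        intro s hs
        rcases eq_or_lt_of_le hs.1 with h0 | h0
        · rw [← h0, hu'0, hu00]; simp
        · have hvs := hvEq s hs
          have hle : (∫ ρ in (0:ℝ)..s, g ρ) ≤ ∫ ρ in (0:ℝ)..s, s ^ m * (C₀ * u s) := by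
            apply intervalIntegral.integral_mono_on h0.le (hgint 0 s le_rfl h0.le hs.2)
              intervalIntegrable_const
            intro x hx
            have hxI : x ∈ Icc (0:ℝ) Rs := ⟨hx.1, le_trans hx.2 hs.2⟩
            have h1 : x ^ m ≤ s ^ m := pow_le_pow_left₀ hx.1 hx.2 m
            have h2 : q x * u x ≤ C₀ * u s := by
              have h3 := humono x s hx.1 hx.2 hs.2
              nlinarith [(hq x hxI).2, (hq x hxI).1, hunn x hxI]
            have h6 : 0 ≤ q x * u x := mul_nonneg (hq x hxI).1.le (hunn x hxI)
            show x ^ m * (q x * u x) ≤ s ^ m * (C₀ * u s)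
            exact mul_le_mul h1 h2 h6 (pow_nonneg hs.1 m)
          rw [intervalIntegral.integral_const, smul_eq_mul, sub_zero, ← hvs] at hle
          have hvv : v s = s ^ m * u' s := rfl
          rw [hvv, show s * (s ^ m * (C₀ * u s)) = s ^ m * (s * (C₀ * u s)) from by ring] at hle
          have h7 : u' s ≤ s * (C₀ * u s) := le_of_mul_le_mul_left hle (pow_pos h0 m)
          nlinarith [mul_nonneg (mul_nonneg hC₀.le (hunn s hs)) (sub_nonneg.mpr hs.2)]
      -- Gronwall via FTC for h := exp (-(C₀*Rs)*r) * u r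
      have hhderiv : ∀ r ∈ Icc (0:ℝ) Rs,
          HasDerivAt (fun r => exp (-(C₀ * Rs) * r) * u r)
            (exp (-(C₀ * Rs) * r) * (-(C₀ * Rs)) * u r + exp (-(C₀ * Rs) * r) * u' r) r := by
        intro r hr
        have he : HasDerivAt (fun r : ℝ => exp (-(C₀ * Rs) * r)) (exp (-(C₀ * Rs) * r) * (-(C₀ * Rs))) r := by
          have := ((hasDerivAt_id r).const_mul (-(C₀ * Rs))).exp
          simpa using this
        exact he.mul (hu' r hr)
      have hcont2 : ContinuousOn (fun r => exp (-(C₀ * Rs) * r) * (-(C₀ * Rs)) * u r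
          + exp (-(C₀ * Rs) * r) * u' r) (Icc 0 Rs) := by
        apply ContinuousOn.add
        · exact ((((Real.continuous_exp.comp (continuous_const.mul continuous_id)).continuousOn).mul
            continuousOn_const).mul hucont)
        · exact ((Real.continuous_exp.comp (continuous_const.mul continuous_id)).continuousOn).mul hu'cont
      have hFTC := intervalIntegral.integral_eq_sub_of_hasDerivAt
          (f := fun r => exp (-(C₀ * Rs) * r) * u r)
          (f' := fun r => exp (-(C₀ * Rs) * r) * (-(C₀ * Rs)) * u r + exp (-(C₀ * Rs) * r) * u' r)
          (a := 0) (b := Rs)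
          (fun x hx => hhderiv x (by rwa [uIcc_of_le hRs.le] at hx))
          (hcont2.intervalIntegrable_of_Icc hRs.le)
      have hint_np : (∫ r in (0:ℝ)..Rs, (exp (-(C₀ * Rs) * r) * (-(C₀ * Rs)) * u r
          + exp (-(C₀ * Rs) * r) * u' r)) ≤ 0 := by
        have h : 0 ≤ ∫ r in (0:ℝ)..Rs, -(exp (-(C₀ * Rs) * r) * (-(C₀ * Rs)) * u r
            + exp (-(C₀ * Rs) * r) * u' r) := by
          apply intervalIntegral.integral_nonneg hRs.le
          intro x hx
          have h1 := hKey x hx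
          simp only [neg_nonneg]
          nlinarith [Real.exp_pos (-(C₀ * Rs) * x)]
        rw [intervalIntegral.integral_neg] at h; linarith
      rw [huRs, hu00] at hFTC
      have := Real.exp_pos (-(C₀ * Rs) * Rs)
      nlinarith [hFTC, hint_np]
  have hupos : ∀ r ∈ Icc (0:ℝ) Rs, 0 < u r := fun r hr => lt_of_lt_of_le hμpos (hminle r hr)
  have hu'nn : ∀ r ∈ Icc (0:ℝ) Rs, 0 ≤ u' r := by
    intro r hr
    rcases eq_or_lt_of_le hr.1 with h0 | h0
    · rw [← h0]; exact le_of_eq hu'0.symm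
    · have hvr : 0 ≤ v r := by
        rw [hvEq r hr]
        apply intervalIntegral.integral_nonneg hr.1
        intro x hx
        have hxI : x ∈ Icc (0:ℝ) Rs := ⟨hx.1, le_trans hx.2 hr.2⟩
        exact mul_nonneg (pow_nonneg hx.1 m) (mul_nonneg (hq x hxI).1.le (hupos x hxI).le)
      have hvv : v r = r ^ m * u' r := rfl
      nlinarith [pow_pos h0 m]
  have humono : ∀ a b : ℝ, 0 ≤ a → a ≤ b → b ≤ Rs → u a ≤ u b := by
    intro a b ha hab hb
    have h := huInt a b ha hab hb
    have hnn : 0 ≤ ∫ ρ in a..b, u' ρ :=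
      intervalIntegral.integral_nonneg hab
        (fun x hx => hu'nn x ⟨le_trans ha hx.1, le_trans hx.2 hb⟩)
    linarith
  have hule1 : ∀ r ∈ Icc (0:ℝ) Rs, u r ≤ 1 := by
    intro r hr
    have h := humono r Rs hr.1 hr.2 le_rfl
    rwa [huRs] at h
  have hform : ∀ r ∈ Ioc (0:ℝ) Rs,
      u' r = (∫ ρ in (0:ℝ)..r, ρ ^ m * q ρ * u ρ) / r ^ m := by
    intro r hr
    have hrI : r ∈ Icc (0:ℝ) Rs := ⟨hr.1.le, hr.2⟩
    have hv := hvEq r hrI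
    have hrm : (0:ℝ) < r ^ m := pow_pos hr.1 m
    rw [eq_div_iff (ne_of_gt hrm)]
    have hcongr : (∫ ρ in (0:ℝ)..r, ρ ^ m * q ρ * u ρ) = ∫ ρ in (0:ℝ)..r, g ρ := by
      apply intervalIntegral.integral_congr
      intro x hx
      show x ^ m * q x * u x = x ^ m * (q x * u x)
      ring
    rw [hcongr, ← hv]
    show u' r * r ^ m = r ^ m * u' r
    ring
  have hm1cast : ((m:ℝ) + 1) = (n:ℝ) + 2 * k := by rw [hmcast]; ring
  have hiii : ∀ r ∈ Icc (0:ℝ) Rs, 0 ≤ u' r ∧ u' r ≤ C₀ * r / ((n:ℝ) + 2 * k) := by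
    intro r hr
    refine ⟨hu'nn r hr, ?_⟩
    rcases eq_or_lt_of_le hr.1 with h0 | h0
    · rw [← h0, hu'0]; simp
    · have hvle : v r ≤ C₀ * (r ^ (m + 1) / ((m:ℝ) + 1)) := by
        rw [hvEq r hr]
        have hle : (∫ ρ in (0:ℝ)..r, g ρ) ≤ ∫ ρ in (0:ℝ)..r, C₀ * ρ ^ m := by
          apply intervalIntegral.integral_mono_on h0.le (hgint 0 r le_rfl h0.le hr.2)
            ((continuous_const.mul (continuous_pow m)).intervalIntegrable 0 r)
          intro x hx
          have hxI : x ∈ Icc (0:ℝ) Rs := ⟨hx.1, le_trans hx.2 hr.2⟩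
          have h2 : q x * u x ≤ C₀ := by
            calc q x * u x ≤ q x * 1 :=
                  mul_le_mul_of_nonneg_left (hule1 x hxI) (hq x hxI).1.le
              _ = q x := mul_one _
              _ ≤ C₀ := (hq x hxI).2
          show x ^ m * (q x * u x) ≤ C₀ * x ^ m
          rw [mul_comm C₀ (x ^ m)]
          exact mul_le_mul_of_nonneg_left h2 (pow_nonneg hx.1 m)
        have hval : (∫ ρ in (0:ℝ)..r, C₀ * ρ ^ m) = C₀ * (r ^ (m + 1) / ((m:ℝ) + 1)) := by
          rw [intervalIntegral.integral_const_mul, integral_pow]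
          norm_num
        rw [hval] at hle
        exact hle
      have hrm : (0:ℝ) < r ^ m := pow_pos h0 m
      have hvv : v r = r ^ m * u' r := rfl
      have h1 : r ^ m * u' r ≤ r ^ m * (C₀ * r / ((m:ℝ) + 1)) := by
        rw [← hvv]
        calc v r ≤ C₀ * (r ^ (m + 1) / ((m:ℝ) + 1)) := hvle
          _ = r ^ m * (C₀ * r / ((m:ℝ) + 1)) := by rw [pow_succ]; ring
      have h2 := le_of_mul_le_mul_left h1 hrm
      rwa [← hm1cast]
  have hiv : ∀ r ∈ Icc (0:ℝ) Rs, 1 - (C₀ * Rs / ((n:ℝ) + 2 * k)) * (Rs - r) ≤ u r := by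
    intro r hr
    have hden : (0:ℝ) < (n:ℝ) + 2 * k := by
      have h := Nat.cast_nonneg (α := ℝ) m
      linarith [hmcast]
    have hint := huInt r Rs hr.1 hr.2 le_rfl
    have h1 : (∫ ρ in r..Rs, u' ρ) ≤ ∫ ρ in r..Rs, (C₀ * Rs / ((n:ℝ) + 2 * k)) := by
      apply intervalIntegral.integral_mono_on hr.2
        ((hu'cont.mono (Icc_subset_Icc hr.1 le_rfl)).intervalIntegrable_of_Icc hr.2)
        intervalIntegrable_const
      intro x hx
      have hxI : x ∈ Icc (0:ℝ) Rs := ⟨le_trans hr.1 hx.1, hx.2⟩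
      have h2 := (hiii x hxI).2
      have h3 : C₀ * x / ((n:ℝ) + 2 * k) ≤ C₀ * Rs / ((n:ℝ) + 2 * k) := by
        gcongr
        exact hxI.2
      linarith
    rw [intervalIntegral.integral_const, smul_eq_mul] at h1
    rw [huRs] at hint
    have h4 : (Rs - r) * (C₀ * Rs / ((n:ℝ) + 2 * k)) = C₀ * Rs / ((n:ℝ) + 2 * k) * (Rs - r) :=
      mul_comm _ _
    linarith
  exact ⟨fun r hr => ⟨hupos r hr, hule1 r hr⟩, hform, hiii, fun r hr => ⟨hiv r hr, hule1 r hr⟩⟩
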